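/- For each t ∈ [0,1), the operator C_t is not supercyclic on ω: there is no complex sequence x such that the projective orbit {λ · C_t^n x : λ ∈ ℂ, n ∈ ℕ₀} is dense in ω. -/

import Mathlib

/-- The generalized Cesàro operator `C_t` acting on complex sequences:
`(C_t x)_n = (1/(n+1)) ∑_{i=0}^n t^{n-i} x_i`. -/
noncomputable def genCesaro (t : ℝ) (x : ℕ → ℂ) : ℕ → ℂ :=
  fun n => (1 / ((n : ℂ) + 1)) * ∑ i ∈ Finset.range (n + 1), (t : ℂ) ^ (n - i) * x i

/-- For each `t ∈ [0,1)`, the operator `C_t` is not supercyclic on `ω = ℂ^ℕ`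
(product topology): there is no sequence `x` whose projective orbit
`{λ · C_tⁿ x : λ ∈ ℂ, n ∈ ℕ}` is dense in `ω`. -/
theorem genCesaro_not_supercyclic (t : ℝ) (ht : t ∈ Set.Ico (0 : ℝ) 1) :
    ¬ ∃ x : ℕ → ℂ,
      Dense {y : ℕ → ℂ | ∃ (c : ℂ) (n : ℕ), y = c • (genCesaro t)^[n] x} := by
  rintro ⟨x, hd⟩
  set S := {y : ℕ → ℂ | ∃ (c : ℂ) (n : ℕ), y = c • (genCesaro t)^[n] x} with hS
  have h0 : ∀ y : ℕ → ℂ, genCesaro t y 0 = y 0 := by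
    intro y; simp [genCesaro]
  have h1 : ∀ y : ℕ → ℂ, genCesaro t y 1 = (1/2) * ((t : ℂ) * y 0 + y 1) := by
    intro y
    simp only [genCesaro]
    rw [Finset.sum_range_succ, Finset.sum_range_one]
    norm_num
  have hit0 : ∀ n, (genCesaro t)^[n] x 0 = x 0 := by
    intro n; induction n with
    | zero => rfl
    | succ n ih => rw [Function.iterate_succ_apply', h0, ih]
  have hit1 : ∀ n, (genCesaro t)^[n] x 1
      = (t : ℂ) * x 0 + (x 1 - (t : ℂ) * x 0) / 2 ^ n := by
    intro n; induction n with
    | zero => simp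
    | succ n ih =>
      rw [Function.iterate_succ_apply', h1, ih, hit0]
      have h2 : (2 : ℂ) ^ n ≠ 0 := pow_ne_zero _ two_ne_zero
      field_simp
      ring
  by_cases hx0 : x 0 = 0
  · -- every orbit point has 0-th coordinate 0
    have hsub : S ⊆ {y : ℕ → ℂ | y 0 = 0} := by
      rintro y ⟨c, n, rfl⟩
      simp [hit0 n, hx0]
    have hclosed : IsClosed {y : ℕ → ℂ | y 0 = 0} :=
      isClosed_eq (continuous_apply 0) continuous_const
    have h := hclosed.closure_subset_iff.mpr hsub
    rw [hd.closure_eq] at h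
    have : (fun _ : ℕ => (1 : ℂ)) ∈ {y : ℕ → ℂ | y 0 = 0} := h (Set.mem_univ _)
    simp at this
  · -- x 0 ≠ 0 case
    set M : ℝ := |t| + ‖x 1 / x 0 - (t : ℂ)‖ with hM
    have hM0 : 0 ≤ M := add_nonneg (abs_nonneg _) (norm_nonneg _)
    set w : ℂ := ((M + 1 : ℝ) : ℂ) with hw
    set b : ℕ → ℂ := fun n => (t : ℂ) + (x 1 / x 0 - (t : ℂ)) / 2 ^ n with hb
    have hbM : ∀ n, ‖b n‖ ≤ M := by
      intro n
      have h2 : ‖(x 1 / x 0 - (t : ℂ)) / 2 ^ n‖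
          ≤ ‖x 1 / x 0 - (t : ℂ)‖ := by
        rw [norm_div]
        have : (1 : ℝ) ≤ ‖(2 : ℂ) ^ n‖ := by
          rw [norm_pow, Complex.norm_two]
          calc (1 : ℝ) = 1 ^ n := (one_pow n).symm
            _ ≤ 2 ^ n := pow_le_pow_left₀ (by norm_num) (by norm_num) n
        exact div_le_self (norm_nonneg _) this
      calc ‖b n‖ ≤ ‖(t : ℂ)‖ +
            ‖(x 1 / x 0 - (t : ℂ)) / 2 ^ n‖ := norm_add_le _ _
        _ ≤ |t| + ‖x 1 / x 0 - (t : ℂ)‖ := by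
            rw [Complex.norm_real, Real.norm_eq_abs]; exact add_le_add le_rfl h2
        _ = M := rfl
    have hwb : ∀ n, (1 : ℝ) ≤ ‖w - b n‖ := by
      intro n
      have : ‖w‖ - ‖b n‖ ≤ ‖w - b n‖ := by
        simpa using norm_sub_norm_le w (b n)
      have hwabs : ‖w‖ = M + 1 := by
        rw [hw, Complex.norm_real, Real.norm_eq_abs, abs_of_nonneg (by linarith)]
      nlinarith [hbM n]
    -- choose ε
    set ε : ℝ := 1 / (2 * (M + 1)) with hε
    have hεpos : 0 < ε := by positivity
    -- target point
    set y : ℕ → ℂ := fun n => if n = 0 then 1 else w with hy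
    have hyc : y ∈ closure S := hd y
    have hopen : IsOpen {z : ℕ → ℂ | ‖z 0 - 1‖ < ε ∧ ‖z 1 - w‖ < ε} := by
      have e0 : IsOpen {z : ℕ → ℂ | ‖z 0 - 1‖ < ε} := by
        have : {z : ℕ → ℂ | ‖z 0 - 1‖ < ε}
            = (fun z : ℕ → ℂ => z 0) ⁻¹' Metric.ball (1 : ℂ) ε := by
          ext z; simp [Metric.mem_ball, Complex.dist_eq]
        rw [this]; exact Metric.isOpen_ball.preimage (continuous_apply 0)
      have e1 : IsOpen {z : ℕ → ℂ | ‖z 1 - w‖ < ε} := by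
        have : {z : ℕ → ℂ | ‖z 1 - w‖ < ε}
            = (fun z : ℕ → ℂ => z 1) ⁻¹' Metric.ball w ε := by
          ext z; simp [Metric.mem_ball, Complex.dist_eq]
        rw [this]; exact Metric.isOpen_ball.preimage (continuous_apply 1)
      exact e0.inter e1
    have hymem : y ∈ {z : ℕ → ℂ | ‖z 0 - 1‖ < ε ∧ ‖z 1 - w‖ < ε} := by
      constructor <;> simp [hy, hεpos]
    obtain ⟨z, hzU, hzS⟩ := (mem_closure_iff.mp hyc) _ hopen hymem
    obtain ⟨c, n, rfl⟩ := hzS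
    obtain ⟨hz0, hz1⟩ := hzU
    have hz0' : ‖c * x 0 - 1‖ < ε := by
      simpa [hit0 n] using hz0
    have hx0b : (t : ℂ) * x 0 + (x 1 - (t : ℂ) * x 0) / 2 ^ n = x 0 * b n := by
      rw [hb]
      have h2 : (2 : ℂ) ^ n ≠ 0 := pow_ne_zero _ two_ne_zero
      field_simp
    have hz1' : ‖c * x 0 * b n - w‖ < ε := by
      have := hz1
      simp only [Pi.smul_apply, smul_eq_mul, hit1 n] at this
      rw [hx0b, ← mul_assoc] at this
      exact this
    -- final estimate
    have key : ‖w - b n‖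
        ≤ ‖c * x 0 * b n - w‖ + ‖b n‖ * ‖c * x 0 - 1‖ := by
      have heq : w - b n = (w - c * x 0 * b n) + b n * (c * x 0 - 1) := by ring
      calc ‖w - b n‖
          ≤ ‖w - c * x 0 * b n‖ + ‖b n * (c * x 0 - 1)‖ := by
            rw [heq]; exact norm_add_le _ _
        _ = ‖c * x 0 * b n - w‖ + ‖b n‖ * ‖c * x 0 - 1‖ := by
            rw [norm_mul, norm_sub_rev]
    have hεM : ε + M * ε ≤ 1 / 2 := by
      have h1 : (M : ℝ) + 1 ≠ 0 := by linarith
      have heq : ε + M * ε = (M + 1) / (2 * (M + 1)) := by rw [hε]; ring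
      rw [heq, mul_comm, ← div_div, div_self h1]
    have : (1 : ℝ) < 1 := by
      calc (1 : ℝ) ≤ ‖w - b n‖ := hwb n
        _ ≤ ‖c * x 0 * b n - w‖ + ‖b n‖ * ‖c * x 0 - 1‖ := key
        _ < ε + M * ε := by
            have := hbM n
            have h1 := hz1'
            have h0 := hz0'
            nlinarith [norm_nonneg (c * x 0 - 1)]
        _ ≤ 1 / 2 := hεM
        _ < 1 := by norm_num
    exact absurd this (lt_irrefl 1)
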